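/- Let λ₁ and λ₂ be probability distributions on a finite set X with KL-divergence D(λ₁‖λ₂) ≤ d for some d > 0 (logarithms base 2). Then for every subset S ⊆ X, λ₂(S) ≥ λ₁(S) / 2^(2 + 2/λ₁(S) + 2d/λ₁(S)). -/

import Mathlib

open Finset Real

lemma substate_pointwise (a b : ℝ) (ha : 0 ≤ a) (hb : 0 ≤ b) (hab : 0 < a → 0 < b) :
    (a - b) / Real.log 2 ≤ a * Real.logb 2 (a / b) := by
  have hlog2 : (0:ℝ) < Real.log 2 := Real.log_pos (by norm_num)
  rcases eq_or_lt_of_le ha with h | h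
  · simp only [← h, zero_mul, zero_sub]
    apply div_nonpos_of_nonpos_of_nonneg <;> linarith
  · have hbpos := hab h
    have hlog : Real.log (b / a) ≤ b / a - 1 :=
      Real.log_le_sub_one_of_pos (by positivity)
    have hlog' : 1 - b / a ≤ Real.log (a / b) := by
      rw [Real.log_div (ne_of_gt h) (ne_of_gt hbpos)]
      rw [Real.log_div (ne_of_gt hbpos) (ne_of_gt h)] at hlog
      linarith
    have key : a - b ≤ a * Real.log (a / b) := by
      have := mul_le_mul_of_nonneg_left hlog' (le_of_lt h)
      have ha' : a * (1 - b / a) = a - b := by field_simp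
      linarith [ha' ▸ this]
    rw [Real.logb, ← mul_div_assoc]
    gcongr

theorem substate_theorem {X : Type*} [Fintype X] (lam1 lam2 : X → ℝ) (d : ℝ)
    (h1nn : ∀ x, 0 ≤ lam1 x) (h2nn : ∀ x, 0 ≤ lam2 x)
    (h1sum : ∑ x, lam1 x = 1) (h2sum : ∑ x, lam2 x = 1)
    (habs : ∀ x, 0 < lam1 x → 0 < lam2 x)
    (hd : 0 < d)
    (hkl : ∑ x, lam1 x * Real.logb 2 (lam1 x / lam2 x) ≤ d) :
    ∀ S : Finset X,
      ∑ x ∈ S, lam2 x ≥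
        (∑ x ∈ S, lam1 x) /
          (2 : ℝ) ^ (2 + 2 / ∑ x ∈ S, lam1 x + 2 * d / ∑ x ∈ S, lam1 x) := by
  intro S
  classical
  have hlog2 : (0:ℝ) < Real.log 2 := Real.log_pos (by norm_num)
  set p : ℝ := ∑ x ∈ S, lam1 x with hp
  have hpnn : 0 ≤ p := Finset.sum_nonneg fun x _ => h1nn x
  have hS2nn : 0 ≤ ∑ x ∈ S, lam2 x := Finset.sum_nonneg fun x _ => h2nn x
  rcases eq_or_lt_of_le hpnn with h0 | hppos
  · rw [ge_iff_le, ← h0, zero_div]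
    exact hS2nn
  -- main case
  set c : ℝ := (2 + 2 * d) / p with hc
  have hcpos : 0 < c := by positivity
  have hcp : c * p = 2 + 2 * d := by rw [hc, div_mul_cancel₀ _ hppos.ne']
  have hexp : 2 + 2 / p + 2 * d / p = 2 + c := by
    rw [hc]; ring
  set T : Finset X := S.filter (fun x => lam1 x ≤ lam2 x * (2:ℝ) ^ c) with hT
  have hTS : T ⊆ S := Finset.filter_subset _ _
  have hrpos : (0:ℝ) < (2:ℝ) ^ c := Real.rpow_pos_of_pos (by norm_num) c
  -- bound on sum over A = S \ T
  set A : Finset X := S \ T with hA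
  have hAmem : ∀ x ∈ A, lam2 x * (2:ℝ) ^ c < lam1 x := by
    intro x hx
    rw [hA, Finset.mem_sdiff] at hx
    have := hx.2
    rw [hT, Finset.mem_filter] at this
    push_neg at this
    exact this hx.1
  have hAterm : ∀ x ∈ A, c * lam1 x ≤ lam1 x * Real.logb 2 (lam1 x / lam2 x) := by
    intro x hx
    have h1 : lam2 x * (2:ℝ) ^ c < lam1 x := hAmem x hx
    have h1pos : 0 < lam1 x := lt_of_le_of_lt (mul_nonneg (h2nn x) hrpos.le) h1
    have h2pos : 0 < lam2 x := habs x h1pos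
    have hratio : (2:ℝ) ^ c < lam1 x / lam2 x := by
      rw [lt_div_iff₀ h2pos]; linarith [h1]
    have hlogc : c < Real.logb 2 (lam1 x / lam2 x) := by
      have := Real.logb_lt_logb (b := 2) (by norm_num) hrpos hratio
      rwa [Real.logb_rpow (by norm_num) (by norm_num)] at this
    nlinarith [hlogc, h1pos]
  have hAsum : c * ∑ x ∈ A, lam1 x ≤ ∑ x ∈ A, lam1 x * Real.logb 2 (lam1 x / lam2 x) := by
    rw [Finset.mul_sum]
    exact Finset.sum_le_sum hAterm
  -- complement bound
  have hAu : A ⊆ Finset.univ := Finset.subset_univ _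
  have hsplit : ∑ x ∈ Finset.univ \ A, lam1 x * Real.logb 2 (lam1 x / lam2 x)
      + ∑ x ∈ A, lam1 x * Real.logb 2 (lam1 x / lam2 x)
      = ∑ x, lam1 x * Real.logb 2 (lam1 x / lam2 x) := Finset.sum_sdiff hAu
  have hcomp : -(1 / Real.log 2) ≤ ∑ x ∈ Finset.univ \ A, lam1 x * Real.logb 2 (lam1 x / lam2 x) := by
    have hpw : ∀ x ∈ Finset.univ \ A, (lam1 x - lam2 x) / Real.log 2
        ≤ lam1 x * Real.logb 2 (lam1 x / lam2 x) := fun x _ =>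
      substate_pointwise _ _ (h1nn x) (h2nn x) (habs x)
    have h1 : ∑ x ∈ Finset.univ \ A, (lam1 x - lam2 x) / Real.log 2
        ≤ ∑ x ∈ Finset.univ \ A, lam1 x * Real.logb 2 (lam1 x / lam2 x) :=
      Finset.sum_le_sum hpw
    have h2 : ∑ x ∈ Finset.univ \ A, (lam1 x - lam2 x) / Real.log 2
        = ((∑ x ∈ Finset.univ \ A, lam1 x) - ∑ x ∈ Finset.univ \ A, lam2 x) / Real.log 2 := by
      rw [← Finset.sum_div, Finset.sum_sub_distrib]
    have h3 : ∑ x ∈ Finset.univ \ A, lam2 x ≤ 1 := by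
      rw [← h2sum]
      exact Finset.sum_le_sum_of_subset_of_nonneg (Finset.subset_univ _)
        (fun x _ _ => h2nn x)
    have h4 : 0 ≤ ∑ x ∈ Finset.univ \ A, lam1 x :=
      Finset.sum_nonneg fun x _ => h1nn x
    have h5 : -(1 / Real.log 2) ≤ ((∑ x ∈ Finset.univ \ A, lam1 x)
        - ∑ x ∈ Finset.univ \ A, lam2 x) / Real.log 2 := by
      rw [neg_le, ← neg_div]
      gcongr
      linarith
    linarith [h2 ▸ h1]
  have hmain : c * ∑ x ∈ A, lam1 x ≤ d + 1 / Real.log 2 := by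
    have := hkl
    nlinarith [hsplit, hcomp, hAsum]
  -- λ₁(A) ≤ 3p/4
  have hlog23 : (2:ℝ)/3 ≤ Real.log 2 := by
    have := Real.log_two_gt_d9
    linarith
  have hAnn : 0 ≤ ∑ x ∈ A, lam1 x := Finset.sum_nonneg fun x _ => h1nn x
  have hA34 : ∑ x ∈ A, lam1 x ≤ 3 * p / 4 := by
    have hinv : 1 / Real.log 2 ≤ 3 / 2 := by
      rw [div_le_div_iff₀ hlog2 (by norm_num)]
      linarith
    by_contra hcon
    push_neg at hcon
    have : c * (3 * p / 4) ≤ c * ∑ x ∈ A, lam1 x :=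
      mul_le_mul_of_nonneg_left (le_of_lt hcon) (le_of_lt hcpos)
    have hcpm : c * (3 * p / 4) = (3/4) * (2 + 2 * d) := by
      rw [show c * (3 * p / 4) = (c * p) * (3/4) by ring, hcp]; ring
    nlinarith
  -- λ₁(T) ≥ p/4
  have hTsum : ∑ x ∈ A, lam1 x + ∑ x ∈ T, lam1 x = p := Finset.sum_sdiff hTS
  have hT14 : p / 4 ≤ ∑ x ∈ T, lam1 x := by linarith
  -- final chain
  have hT2 : (∑ x ∈ T, lam1 x) / (2:ℝ) ^ c ≤ ∑ x ∈ T, lam2 x := by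
    rw [div_le_iff₀ hrpos, Finset.sum_mul]
    apply Finset.sum_le_sum
    intro x hx
    rw [hT, Finset.mem_filter] at hx
    exact hx.2
  have hTS2 : ∑ x ∈ T, lam2 x ≤ ∑ x ∈ S, lam2 x :=
    Finset.sum_le_sum_of_subset_of_nonneg hTS (fun x _ _ => h2nn x)
  rw [ge_iff_le, hexp]
  have h2c : (2:ℝ) ^ (2 + c) = 4 * (2:ℝ) ^ c := by
    rw [Real.rpow_add (by norm_num)]
    norm_num
  rw [h2c]
  have : p / (4 * (2:ℝ)^c) ≤ (∑ x ∈ T, lam1 x) / (2:ℝ)^c := by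
    rw [div_le_div_iff₀ (by positivity) hrpos]
    nlinarith [hT14, hrpos]
  linarith [hT2, hTS2]
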